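/- arXiv:2308.08171 — 2 statements merged into one kernel-verified Lean document; each statement's English description precedes it below -/
import Mathlib

section
/- (Existence of an entering variable from the optimal basis.) Consider the linear program min cᵀx subject to Ax = b, l ≤ x ≤ u, with A ∈ ℝ^{m×n}, b ∈ ℝᵐ, and c, l, u ∈ ℝⁿ. Let (B, N_l, N_u) be a basis partition with associated basic solution xᵏ and reduced costs c̄. If x* ∈ ℝⁿ is feasible (A x* = b and l ≤ x* ≤ u) and cᵀxᵏ > cᵀx*, then there exists an index j such that either j ∈ N_l with c̄_j < 0 and x*_j > l_j, or j ∈ N_u with c̄_j > 0 and x*_j < u_j. In particular, this variable j can enter the current basis (its reduced cost has the improving sign) and its status at xᵏ differs from its status at x*. -/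
open Finset

/-- **Existence of an entering variable from the optimal basis.**
For the LP `min cᵀx s.t. Ax = b, l ≤ x ≤ u`, let `(B, Nl, Nu)` be a basis
partition with associated basic solution `xk` and reduced costs `cbar`.
If `x*` is feasible (`A x* = b`, `l ≤ x* ≤ u`) and `cᵀxᵏ > cᵀx*`, then there
is an index `j` with either `j ∈ Nl`, `c̄_j < 0`, `x*_j > l_j`, or
`j ∈ Nu`, `c̄_j > 0`, `x*_j < u_j`. -/
theorem lp_entering_variable_exists
    (m n : ℕ)
    (A : Matrix (Fin m) (Fin n) ℝ) (b : Fin m → ℝ) (c l u : Fin n → ℝ)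
    -- basis partition (B, Nl, Nu) of {1,…,n}
    (B Nl Nu : Finset (Fin n))
    (hBNl : Disjoint B Nl) (hBNu : Disjoint B Nu) (hNlNu : Disjoint Nl Nu)
    (hcover : B ∪ Nl ∪ Nu = Finset.univ)
    -- the m basic columns, indexed bijectively by Fin m
    (basis : Fin m → Fin n) (hbasis_inj : Function.Injective basis)
    (hbasis_range : Finset.image basis Finset.univ = B)
    -- invertibility of the basic matrix A_B, with inverse ABinv
    (ABinv : Matrix (Fin m) (Fin m) ℝ)
    (hAB_left : (Matrix.of fun i k => A i (basis k)) * ABinv = 1)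
    (hAB_right : ABinv * (Matrix.of fun i k => A i (basis k)) = 1)
    -- the associated basic solution xᵏ
    (xk : Fin n → ℝ)
    (hxk_l : ∀ j ∈ Nl, xk j = l j)
    (hxk_u : ∀ j ∈ Nu, xk j = u j)
    (hxk_B : ∀ i : Fin m,
      xk (basis i) =
        ∑ k : Fin m, ABinv i k *
          (b k - (∑ j ∈ Nl, A k j * l j) - (∑ j ∈ Nu, A k j * u j)))
    -- the reduced costs c̄_j = c_j − c_Bᵀ A_B⁻¹ A_j
    (cbar : Fin n → ℝ)
    (hcbar : ∀ j : Fin n,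
      cbar j = c j - ∑ i : Fin m, (∑ k : Fin m, c (basis k) * ABinv k i) * A i j)
    -- any x* satisfying A x* = b
    (xstar : Fin n → ℝ)
    (hxstar : ∀ i : Fin m, ∑ j : Fin n, A i j * xstar j = b i)
    (hxstar_lb : ∀ j : Fin n, l j ≤ xstar j)
    (hxstar_ub : ∀ j : Fin n, xstar j ≤ u j)
    (hobj : ∑ j : Fin n, c j * xstar j < ∑ j : Fin n, c j * xk j) :
    ∃ j : Fin n,
      (j ∈ Nl ∧ cbar j < 0 ∧ l j < xstar j) ∨
      (j ∈ Nu ∧ 0 < cbar j ∧ xstar j < u j) := by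

  set y : Fin m → ℝ := fun i => ∑ k : Fin m, c (basis k) * ABinv k i with hy
  have hsumB : ∀ f : Fin n → ℝ, ∑ j ∈ B, f j = ∑ k : Fin m, f (basis k) := by
    intro f
    rw [← hbasis_range, Finset.sum_image (fun a _ b _ h => hbasis_inj h)]
  have hsplit : ∀ f : Fin n → ℝ, ∑ j : Fin n, f j =
      (∑ k : Fin m, f (basis k)) + (∑ j ∈ Nl, f j) + ∑ j ∈ Nu, f j := by
    intro f
    rw [← hcover, Finset.sum_union (Finset.disjoint_union_left.mpr ⟨hBNu, hNlNu⟩),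
      Finset.sum_union hBNl, hsumB]
  have hleft : ∀ i t : Fin m, ∑ k : Fin m, A i (basis k) * ABinv k t
      = if i = t then 1 else 0 := by
    intro i t
    have := congrFun (congrFun hAB_left i) t
    simpa [Matrix.mul_apply, Matrix.one_apply] using this
  have hright : ∀ t k : Fin m, ∑ i : Fin m, ABinv t i * A i (basis k)
      = if t = k then 1 else 0 := by
    intro t k
    have := congrFun (congrFun hAB_right t) k
    simpa [Matrix.mul_apply, Matrix.one_apply] using this
  have hAxk : ∀ i : Fin m, ∑ j : Fin n, A i j * xk j = b i := by
    intro i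
    rw [hsplit]
    have h1 : ∑ j ∈ Nl, A i j * xk j = ∑ j ∈ Nl, A i j * l j :=
      Finset.sum_congr rfl fun j hj => by rw [hxk_l j hj]
    have h2 : ∑ j ∈ Nu, A i j * xk j = ∑ j ∈ Nu, A i j * u j :=
      Finset.sum_congr rfl fun j hj => by rw [hxk_u j hj]
    have h3 : ∑ k : Fin m, A i (basis k) * xk (basis k)
        = b i - (∑ j ∈ Nl, A i j * l j) - (∑ j ∈ Nu, A i j * u j) := by
      calc ∑ k : Fin m, A i (basis k) * xk (basis k)
          = ∑ k : Fin m, ∑ t : Fin m, A i (basis k) * (ABinv k t *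
              (b t - (∑ j ∈ Nl, A t j * l j) - (∑ j ∈ Nu, A t j * u j))) := by
            simp_rw [hxk_B, Finset.mul_sum]
        _ = ∑ t : Fin m, (∑ k : Fin m, A i (basis k) * ABinv k t) *
              (b t - (∑ j ∈ Nl, A t j * l j) - (∑ j ∈ Nu, A t j * u j)) := by
            rw [Finset.sum_comm]
            simp_rw [Finset.sum_mul, mul_assoc]
        _ = _ := by simp [hleft]
    rw [h1, h2, h3]; ring
  have key : ∀ x : Fin n → ℝ, (∀ i, ∑ j : Fin n, A i j * x j = b i) →
      ∑ j : Fin n, c j * x j = (∑ i : Fin m, y i * b i) + ∑ j : Fin n, cbar j * x j := by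
    intro x hx
    have h4 : ∑ j : Fin n, (∑ i : Fin m, y i * A i j) * x j
        = ∑ i : Fin m, y i * b i := by
      calc ∑ j : Fin n, (∑ i : Fin m, y i * A i j) * x j
          = ∑ i : Fin m, ∑ j : Fin n, y i * (A i j * x j) := by
            simp_rw [Finset.sum_mul]
            rw [Finset.sum_comm]
            simp_rw [mul_assoc]
        _ = ∑ i : Fin m, y i * b i := by simp_rw [← Finset.mul_sum, hx]
    have h5 : ∑ j : Fin n, cbar j * x j
        = ∑ j : Fin n, c j * x j - ∑ j : Fin n, (∑ i : Fin m, y i * A i j) * x j := by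
      simp_rw [hcbar, sub_mul, Finset.sum_sub_distrib]
      rfl
    rw [h5, h4]; ring
  have hcbar0 : ∀ k : Fin m, cbar (basis k) = 0 := by
    intro k
    rw [hcbar]
    have h6 : ∑ i : Fin m, y i * A i (basis k) = c (basis k) := by
      simp_rw [hy, Finset.sum_mul]
      rw [Finset.sum_comm]
      simp_rw [mul_assoc, ← Finset.mul_sum, hright]
      simp
    rw [h6]; ring
  have hx1 := key xstar hxstar
  have hx2 := key xk hAxk
  have hsum : 0 < ∑ j : Fin n, cbar j * (xk j - xstar j) := by
    simp_rw [mul_sub, Finset.sum_sub_distrib]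
    linarith
  rw [hsplit] at hsum
  have hB0 : ∑ k : Fin m, cbar (basis k) * (xk (basis k) - xstar (basis k)) = 0 := by
    simp [hcbar0]
  rw [hB0, zero_add] at hsum
  by_contra hcon
  push_neg at hcon
  have hNl0 : ∑ j ∈ Nl, cbar j * (xk j - xstar j) ≤ 0 := by
    apply Finset.sum_nonpos
    intro j hj
    have h1 := hxstar_lb j
    have h2 := (hcon j).1 hj
    rw [hxk_l j hj]
    rcases lt_or_ge (cbar j) 0 with hc | hc
    · have h3 := h2 hc
      nlinarith
    · nlinarith
  have hNu0 : ∑ j ∈ Nu, cbar j * (xk j - xstar j) ≤ 0 := by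
    apply Finset.sum_nonpos
    intro j hj
    have h1 := hxstar_ub j
    have h2 := (hcon j).2 hj
    rw [hxk_u j hj]
    rcases lt_or_ge 0 (cbar j) with hc | hc
    · have h3 := h2 hc
      nlinarith
    · nlinarith
  linarith
end

section
/- (Existence of an entering variable, standard form.) Consider the linear program min cᵀx subject to Ax = b, x ≥ 0, with A ∈ ℝ^{m×n}, b ∈ ℝᵐ, c ∈ ℝⁿ. Let B ⊆ {1,…,n} with |B| = m be a basis such that the column submatrix A_B is invertible, and let xᵏ be the associated basic solution (xᵏ_j = 0 for j ∉ B and xᵏ_B = A_B⁻¹ b). If x* ∈ ℝⁿ satisfies A x* = b, x* ≥ 0, and cᵀxᵏ > cᵀx*, then there exists a nonbasic index j ∉ B with reduced cost c̄_j = c_j − c_Bᵀ A_B⁻¹ A_j < 0 and x*_j > 0. -/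
open Finset

/-- **Existence of an entering variable, standard form.**
For the LP `min cᵀx s.t. Ax = b, x ≥ 0`, let `B` be a basis (basic indices
given by the injective map `basis : Fin m → Fin n` with image `B`, and
invertible basic matrix `A_B` with inverse `ABinv`), with associated basic
solution `xᵏ` (`xᵏ_j = 0` for `j ∉ B`, `xᵏ_B = A_B⁻¹ b`).  If `x*` satisfies
`A x* = b`, `x* ≥ 0` and `cᵀxᵏ > cᵀx*`, then there is a nonbasic index `j ∉ B`
with reduced cost `c̄_j = c_j − c_Bᵀ A_B⁻¹ A_j < 0` and `x*_j > 0`. -/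
theorem lp_entering_variable_exists_standard_form
    (m n : ℕ)
    (A : Matrix (Fin m) (Fin n) ℝ) (b : Fin m → ℝ) (c : Fin n → ℝ)
    (B : Finset (Fin n))
    (basis : Fin m → Fin n) (hbasis_inj : Function.Injective basis)
    (hbasis_range : Finset.image basis Finset.univ = B)
    (ABinv : Matrix (Fin m) (Fin m) ℝ)
    (hAB_left : (Matrix.of fun i k => A i (basis k)) * ABinv = 1)
    (hAB_right : ABinv * (Matrix.of fun i k => A i (basis k)) = 1)
    -- the associated basic solution xᵏ
    (xk : Fin n → ℝ)
    (hxk_nonbasic : ∀ j : Fin n, j ∉ B → xk j = 0)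
    (hxk_B : ∀ i : Fin m, xk (basis i) = ∑ k : Fin m, ABinv i k * b k)
    -- the reduced costs c̄_j = c_j − c_Bᵀ A_B⁻¹ A_j
    (cbar : Fin n → ℝ)
    (hcbar : ∀ j : Fin n,
      cbar j = c j - ∑ i : Fin m, (∑ k : Fin m, c (basis k) * ABinv k i) * A i j)
    -- a feasible x* with strictly smaller objective
    (xstar : Fin n → ℝ)
    (hxstar : ∀ i : Fin m, ∑ j : Fin n, A i j * xstar j = b i)
    (hxstar_nonneg : ∀ j : Fin n, 0 ≤ xstar j)
    (hobj : ∑ j : Fin n, c j * xstar j < ∑ j : Fin n, c j * xk j) :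
    ∃ j : Fin n, j ∉ B ∧ cbar j < 0 ∧ 0 < xstar j := by

  set y : Fin m → ℝ := fun i => ∑ k : Fin m, c (basis k) * ABinv k i with hy
  have hxk_obj : ∑ j : Fin n, c j * xk j = ∑ i : Fin m, y i * b i := by
    have h1 : ∑ j : Fin n, c j * xk j = ∑ j ∈ B, c j * xk j := by
      refine (Finset.sum_subset (Finset.subset_univ B) ?_).symm
      intro j _ hj
      rw [hxk_nonbasic j hj, mul_zero]
    rw [h1, ← hbasis_range, Finset.sum_image (fun a _ b _ h => hbasis_inj h)]
    simp only [hxk_B, Finset.mul_sum, hy]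
    rw [Finset.sum_comm]
    congr 1; ext i
    rw [Finset.sum_mul]
    congr 1; ext k
    ring
  have hstar_obj : ∑ i : Fin m, y i * b i = ∑ j : Fin n, (∑ i : Fin m, y i * A i j) * xstar j := by
    simp only [← hxstar, Finset.mul_sum, Finset.sum_mul]
    rw [Finset.sum_comm]
    congr 1; ext j; congr 1; ext i; ring
  have hkey : ∑ j : Fin n, cbar j * xstar j
      = (∑ j : Fin n, c j * xstar j) - ∑ j : Fin n, c j * xk j := by
    rw [hxk_obj, hstar_obj, ← Finset.sum_sub_distrib]
    congr 1; ext j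
    rw [hcbar j]
    ring
  have hneg : ∑ j : Fin n, cbar j * xstar j < 0 := by
    rw [hkey]; linarith
  have hcbar_basic : ∀ k : Fin m, cbar (basis k) = 0 := by
    intro k
    have h2 : ∀ l : Fin m, ∑ i : Fin m, ABinv l i * A i (basis k)
        = if l = k then (1:ℝ) else 0 := by
      intro l
      have := congrFun (congrFun hAB_right l) k
      simpa [Matrix.mul_apply, Matrix.one_apply] using this
    rw [hcbar]
    have h3 : ∑ i : Fin m, (∑ l : Fin m, c (basis l) * ABinv l i) * A i (basis k)
        = ∑ l : Fin m, c (basis l) * (∑ i : Fin m, ABinv l i * A i (basis k)) := by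
      simp only [Finset.sum_mul, Finset.mul_sum]
      rw [Finset.sum_comm]
      congr 1; ext i; congr 1; ext l; ring
    rw [h3]
    simp [h2]
  obtain ⟨j, -, hj⟩ := Finset.exists_lt_of_sum_lt (g := fun _ => (0:ℝ))
    (f := fun j => cbar j * xstar j) (by simpa using hneg)
  have hxj : 0 < xstar j := by
    rcases lt_or_eq_of_le (hxstar_nonneg j) with h | h
    · exact h
    · exfalso; rw [← h, mul_zero] at hj; exact lt_irrefl 0 hj
  have hcj : cbar j < 0 := by
    by_contra h
    push_neg at h
    nlinarith
  refine ⟨j, ?_, hcj, hxj⟩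
  intro hjB
  rw [← hbasis_range] at hjB
  obtain ⟨k, -, hk⟩ := Finset.mem_image.mp hjB
  rw [← hk, hcbar_basic k] at hcj
  exact lt_irrefl 0 hcj
end
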